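/- Let Φ = {φ_n}_{n=1}^N ⊆ ℂ^M and suppose the map A defined by (A(x))(n) = |⟨x, φ_n⟩|² is injective on ℂ^M modulo the unit circle. Then Φ satisfies the complement property: for every S ⊆ {1,…,N}, either {φ_n}_{n∈S} or {φ_n}_{n∈Sᶜ} spans ℂ^M. -/

import Mathlib

theorem stmt_7 (M N : ℕ) (Φ : Fin N → EuclideanSpace ℂ (Fin M))
    (hinj : ∀ x y : EuclideanSpace ℂ (Fin M),
        (∀ n, ‖(inner ℂ x (Φ n) : ℂ)‖ ^ 2 = ‖(inner ℂ y (Φ n) : ℂ)‖ ^ 2) →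
        ∃ c : ℂ, ‖c‖ = 1 ∧ y = c • x) :
    ∀ S : Set (Fin N),
      Submodule.span ℂ (Φ '' S) = ⊤ ∨ Submodule.span ℂ (Φ '' Sᶜ) = ⊤ := by
  intro S
  by_contra h
  push_neg at h
  obtain ⟨hS, hSc⟩ := h
  -- get nonzero vectors in orthogonal complements
  have hexist : ∀ T : Set (Fin N), Submodule.span ℂ (Φ '' T) ≠ ⊤ →
      ∃ u : EuclideanSpace ℂ (Fin M), u ≠ 0 ∧ ∀ n ∈ T, (inner ℂ u (Φ n) : ℂ) = 0 := by
    intro T hT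
    have hbot : (Submodule.span ℂ (Φ '' T))ᗮ ≠ ⊥ := by
      intro hb
      exact hT ((Submodule.orthogonal_eq_bot_iff).mp hb)
    obtain ⟨u, huK, hu0⟩ := Submodule.exists_mem_ne_zero_of_ne_bot hbot
    refine ⟨u, hu0, fun n hn => ?_⟩
    have : (inner ℂ (Φ n) u : ℂ) = 0 :=
      (Submodule.mem_orthogonal _ u).mp huK _ (Submodule.subset_span ⟨n, hn, rfl⟩)
    rwa [← inner_eq_zero_symm]
  obtain ⟨u, hu0, hu⟩ := hexist S hS
  obtain ⟨v, hv0, hv⟩ := hexist Sᶜ hSc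
  have hkey : ∀ n, ‖(inner ℂ (u + v) (Φ n) : ℂ)‖ ^ 2 = ‖(inner ℂ (u - v) (Φ n) : ℂ)‖ ^ 2 := by
    intro n
    by_cases hn : n ∈ S
    · rw [inner_add_left, inner_sub_left, hu n hn, zero_add, zero_sub, norm_neg]
    · rw [inner_add_left, inner_sub_left, hv n hn, add_zero, sub_zero]
  obtain ⟨c, hc1, hc⟩ := hinj (u + v) (u - v) hkey
  -- derive that u is parallel to v (or u=0 or v=0), hence u ⟂ all Φ n
  have hueq : (1 - c) • u = (1 + c) • v := by
    have : u - v = c • u + c • v := by rw [hc, smul_add]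
    have h2 : u - c • u = v + c • v := by
      apply sub_eq_zero.mp
      have := sub_eq_zero.mpr this
      linear_combination (norm := module) this
    calc (1 - c) • u = u - c • u := by module
    _ = v + c • v := h2
    _ = (1 + c) • v := by module
  have huzero : ∀ n, (inner ℂ u (Φ n) : ℂ) = 0 := by
    by_cases hc1' : c = 1
    · -- then v = 0, contradiction
      exfalso
      apply hv0
      subst hc1'
      simpa using hueq.symm
    · have hne : (1 : ℂ) - c ≠ 0 := sub_ne_zero.mpr (Ne.symm hc1')
      have hu_eq : u = ((1 + c) / (1 - c)) • v := by
        have := congrArg (fun w => ((1 - c)⁻¹ : ℂ) • w) hueq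
        simp only [smul_smul, inv_mul_cancel₀ hne, one_smul] at this
        rw [this, div_eq_inv_mul]
      intro n
      by_cases hn : n ∈ S
      · exact hu n hn
      · rw [hu_eq, inner_smul_left, hv n hn, mul_zero]
  -- now injectivity with y = 0 forces u = 0
  obtain ⟨c', hc'1, hc'⟩ := hinj u 0 (by intro n; rw [huzero n]; simp)
  have : c' ≠ 0 := by intro h0; rw [h0] at hc'1; simp at hc'1
  have h0 : c' • u = 0 := hc'.symm
  rcases smul_eq_zero.mp h0 with h | h
  · exact this h
  · exact hu0 h
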